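/- arXiv:2308.01528 — 4 statements merged into one kernel-verified Lean document; each statement's English description precedes it below -/
import Mathlib

section
/- For all real t with 0 ≤ t < 1, the function F1(t) := ((t^2-1)/(2t))·ln|(t+1)/(t-1)| + 1 (with F1(0):=0) satisfies F1(t) = ∑_{n=1}^∞ 2t^{2n}/(4n^2-1). -/
noncomputable def F1 (t : ℝ) : ℝ :=
  if t = 0 then 0 else ((t^2 - 1)/(2*t)) * Real.log |(t+1)/(t-1)| + 1

theorem stmt_0 (t : ℝ) (ht0 : 0 ≤ t) (ht1 : t < 1) :
    F1 t = ∑' n : ℕ, 2 * t^(2*(n+1)) / (4*((n:ℝ)+1)^2 - 1) := by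
  rcases eq_or_lt_of_le ht0 with h0 | h0
  · simp [F1, ← h0, zero_pow]
  have htne : t ≠ 0 := ne_of_gt h0
  have habs : |t| < 1 := by rw [abs_of_pos h0]; exact ht1
  set L : ℝ := Real.log (1 + t) - Real.log (1 - t) with hLdef
  have hL : HasSum (fun k : ℕ => (2 : ℝ) * (1 / (2 * k + 1)) * t ^ (2 * k + 1)) L :=
    Real.hasSum_log_sub_log_of_abs_lt_one habs
  -- A : sum of t^(2k+2)/(2k+1)
  have hA : HasSum (fun k : ℕ => t ^ (2 * k + 2) / (2 * (k : ℝ) + 1)) (t * L / 2) := by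
    have h := hL.mul_left (t / 2)
    have he : t / 2 * L = t * L / 2 := by ring
    rw [he] at h
    refine HasSum.congr_fun h (fun k => ?_)
    have hk : (2 * (k : ℝ) + 1) ≠ 0 := by positivity
    field_simp
    ring
  -- f k = t^(2k+1)/(2k+1) sums to L/2
  set g : ℕ → ℝ := fun k => t ^ (2 * k + 1) / (2 * (k : ℝ) + 1) with hg
  have hf : HasSum g (L / 2) := by
    have h := hL.mul_left (1 / 2)
    have he : 1 / 2 * L = L / 2 := by ring
    rw [he] at h
    refine HasSum.congr_fun h (fun k => ?_)
    have hk : (2 * (k : ℝ) + 1) ≠ 0 := by positivity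
    simp only [g]
    field_simp
  have hf' : HasSum (fun k : ℕ => g (k + 1)) (L / 2 - t) := by
    have h := (hasSum_nat_add_iff' (f := g) 1).mpr hf
    simpa [g] using h
  have hB : HasSum (fun k : ℕ => t ^ (2 * k + 2) / (2 * (k : ℝ) + 3)) ((L / 2 - t) / t) := by
    have h := hf'.mul_left (1 / t)
    have he : 1 / t * (L / 2 - t) = (L / 2 - t) / t := by ring
    rw [he] at h
    refine HasSum.congr_fun h (fun k => ?_)
    have hk : (2 * (k : ℝ) + 3) ≠ 0 := by positivity
    simp only [g]
    push_cast
    rw [pow_succ, pow_succ]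
    field_simp
    ring
  have hS : HasSum (fun n : ℕ => 2 * t ^ (2 * (n + 1)) / (4 * ((n : ℝ) + 1) ^ 2 - 1))
      (t * L / 2 - (L / 2 - t) / t) := by
    refine HasSum.congr_fun (hA.sub hB) (fun k => ?_)
    have h1 : (2 * (k : ℝ) + 1) ≠ 0 := by positivity
    have h3 : (2 * (k : ℝ) + 3) ≠ 0 := by positivity
    have h4 : (4 * ((k : ℝ) + 1) ^ 2 - 1) ≠ 0 := by
      have : (0:ℝ) ≤ (k:ℝ) := Nat.cast_nonneg k
      nlinarith [sq_nonneg ((k : ℝ))]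
    have hpow : 2 * (k + 1) = 2 * k + 2 := by ring
    rw [hpow]
    field_simp
    ring
  rw [hS.tsum_eq]
  -- now compute F1 t
  have habs2 : |(t + 1) / (t - 1)| = (1 + t) / (1 - t) := by
    rw [abs_div, abs_of_pos (by linarith : (0:ℝ) < t + 1),
      abs_of_neg (by linarith : t - 1 < 0)]
    ring_nf
  have hlog : Real.log |(t + 1) / (t - 1)| = L := by
    rw [habs2, Real.log_div (by linarith) (by linarith)]
  rw [F1, if_neg htne, hlog]
  field_simp
  ring
end

section
/- For all x, y > 0 with x ≠ y, (x/y + y/x)·ln|(x+y)/(x−y)| − 2 ≥ 0. -/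
lemma sinh_le_mul_cosh (u : ℝ) (hu : 0 ≤ u) : Real.sinh u ≤ u * Real.cosh u := by
  have hmono : MonotoneOn (fun s : ℝ => s * Real.cosh s - Real.sinh s) (Set.Ici 0) := by
    apply monotoneOn_of_deriv_nonneg (convex_Ici 0)
    · exact Continuous.continuousOn (by continuity)
    · intro s _
      have hd : HasDerivAt (fun s : ℝ => s * Real.cosh s - Real.sinh s)
          (1 * Real.cosh s + s * Real.sinh s - Real.cosh s) s :=
        ((hasDerivAt_id s).mul (Real.hasDerivAt_cosh s)).sub (Real.hasDerivAt_sinh s)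
      exact hd.differentiableAt.differentiableWithinAt
    · intro s hs
      have hd : HasDerivAt (fun s : ℝ => s * Real.cosh s - Real.sinh s)
          (1 * Real.cosh s + s * Real.sinh s - Real.cosh s) s :=
        ((hasDerivAt_id s).mul (Real.hasDerivAt_cosh s)).sub (Real.hasDerivAt_sinh s)
      rw [hd.deriv]
      have hs0 : 0 < s := by simpa using hs
      have := Real.sinh_pos_iff.mpr hs0
      nlinarith
  have h0 : (0 : ℝ) ∈ Set.Ici (0 : ℝ) := Set.self_mem_Ici
  have hu' : u ∈ Set.Ici (0 : ℝ) := hu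
  have := hmono h0 hu' hu
  simpa using this

lemma key (x y : ℝ) (hy : 0 < y) (hxy : y < x) :
    0 ≤ (x/y + y/x) * Real.log |(x+y)/(x-y)| - 2 := by
  have hx : 0 < x := hy.trans hxy
  have hsub : 0 < x - y := by linarith
  have hz : 1 < (x+y)/(x-y) := by
    rw [lt_div_iff₀ hsub]; linarith
  have hz0 : 0 < (x+y)/(x-y) := by linarith
  rw [abs_of_pos hz0]
  set z := (x+y)/(x-y) with hzdef
  have hu : 0 ≤ Real.log z := Real.log_nonneg hz.le
  have h := sinh_le_mul_cosh (Real.log z) hu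
  rw [Real.sinh_log hz0, Real.cosh_log hz0] at h
  -- h : (z - z⁻¹)/2 ≤ log z * ((z + z⁻¹)/2)
  have hzz : 0 < z + z⁻¹ := by positivity
  have hlog : (z - z⁻¹) / (z + z⁻¹) ≤ Real.log z := by
    rw [div_le_iff₀ hzz]
    nlinarith
  have hval : (z - z⁻¹) / (z + z⁻¹) = 2*x*y/(x^2+y^2) := by
    rw [hzdef, inv_div]
    field_simp
    ring
  rw [hval] at hlog
  have hxy2 : 0 < x^2 + y^2 := by positivity
  have hcoef : 2 ≤ (x/y + y/x) * (2*x*y/(x^2+y^2)) := by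
    have : (x/y + y/x) * (2*x*y/(x^2+y^2)) = 2 := by
      field_simp
    linarith [this]
  have hpos : 0 < x/y + y/x := by positivity
  nlinarith [mul_le_mul_of_nonneg_left hlog hpos.le]

theorem stmt_11 (x y : ℝ) (hx : 0 < x) (hy : 0 < y) (hxy : x ≠ y) :
    0 ≤ (x/y + y/x) * Real.log |(x+y)/(x-y)| - 2 := by
  rcases lt_or_gt_of_ne hxy with h | h
  · have := key y x hx h
    have habs : |(y+x)/(y-x)| = |(x+y)/(x-y)| := by
      rw [abs_div, abs_div, abs_sub_comm, add_comm]
    rw [habs] at this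
    linarith [this]
  · exact key x y hy h
end

section
/- Suppose f : [0,∞) → ℝ is continuous, non-increasing, with f(0) = 1, 0 ≤ f ≤ 1, and s ↦ f(√s) convex on [0,∞). Then for every x > 0 and y ≥ 0, 1 − f(y) ≤ min{y², 1−f(x)} + min{y²·(1−f(x))/x², 1}, provided additionally f(y) ≥ (1+y²/2)^{-2} for all y ≥ 0. -/
theorem stmt_18 (f : ℝ → ℝ)
    (hcont : ContinuousOn f (Set.Ici 0))
    (hmono : AntitoneOn f (Set.Ici 0))
    (hf0 : f 0 = 1)
    (hbound : ∀ y ≥ 0, (1 + y^2/2)^(-2:ℤ) ≤ f y ∧ f y ≤ 1)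
    (hconv : ConvexOn ℝ (Set.Ici 0) (fun s => f (Real.sqrt s))) :
    ∀ x > 0, ∀ y ≥ 0,
      1 - f y ≤ min (y^2) (1 - f x) + min (y^2 * (1 - f x)/x^2) 1 := by
  intro x hx y hy
  have hfx1 : f x ≤ 1 := (hbound x hx.le).2
  have hx2 : (0:ℝ) < x^2 := by positivity
  have hfy0 : 0 < f y := by
    refine lt_of_lt_of_le ?_ (hbound y hy).1
    have h1 : (0:ℝ) < 1 + y^2/2 := by positivity
    positivity
  have hmin2 : 0 ≤ min (y^2 * (1 - f x)/x^2) 1 :=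
    le_min (div_nonneg (mul_nonneg (sq_nonneg y) (by linarith)) hx2.le) zero_le_one
  have hmin1 : 0 ≤ min (y^2) (1 - f x) := le_min (sq_nonneg y) (by linarith)
  by_cases hxy : y ≤ x
  · -- use monotonicity and 1 - f y ≤ y²
    have h1 : f x ≤ f y := hmono hy hx.le hxy
    have h2 : 1 - f y ≤ y^2 := by
      have hb := (hbound y hy).1
      have hu : (0:ℝ) < 1 + y^2/2 := by positivity
      have hz : (1 + y^2/2)^(-2:ℤ) = ((1 + y^2/2)^2)⁻¹ := by
        rw [zpow_neg, zpow_two, sq]; ring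
      rw [hz] at hb
      have hp : (0:ℝ) < (1 + y^2/2)^2 := by positivity
      have h3 : (1:ℝ) - y^2 ≤ ((1 + y^2/2)^2)⁻¹ := by
        rw [inv_eq_one_div, le_div_iff₀ hp]
        nlinarith [sq_nonneg y, sq_nonneg (y^2), pow_nonneg (sq_nonneg y) 3]
      linarith
    have : 1 - f y ≤ min (y^2) (1 - f x) := le_min h2 (by linarith)
    linarith
  · push_neg at hxy
    have hy0 : (0:ℝ) < y := lt_trans hx hxy
    have hy2 : (0:ℝ) < y^2 := by positivity
    set b : ℝ := x^2/y^2 with hbdef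
    have hb0 : 0 ≤ b := by positivity
    have ha0 : 0 ≤ 1 - b := by
      have : x^2 ≤ y^2 := by nlinarith
      rw [sub_nonneg, hbdef, div_le_one hy2]; exact this
    have key := hconv.2 (Set.mem_Ici.2 le_rfl) (Set.mem_Ici.2 hy2.le) ha0 hb0
      (by ring : (1 - b) + b = 1)
    have hb' : b * y^2 = x^2 := by rw [hbdef]; field_simp
    have harg : (1 - b) • (0:ℝ) + b • y^2 = x^2 := by
      rw [smul_eq_mul, smul_eq_mul, mul_zero, zero_add, hb']
    rw [harg] at key
    simp only [Real.sqrt_sq hx.le, Real.sqrt_sq hy0.le, Real.sqrt_zero, hf0,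
      smul_eq_mul, mul_one] at key
    -- key : f x ≤ (1 - b) + b * f y
    have hcleared : (1 - f y) * x^2 ≤ y^2 * (1 - f x) := by
      nlinarith [key]
    have h4 : 1 - f y ≤ y^2 * (1 - f x)/x^2 := by
      rw [le_div_iff₀ hx2]; linarith
    have : 1 - f y ≤ min (y^2 * (1 - f x)/x^2) 1 := le_min h4 (by linarith)
    linarith
end

section
/- Suppose f : [0,∞) → ℝ is continuous with (1+y²/2)^{-2} ≤ f(y) ≤ 1, f non-increasing, f(0)=1, and s ↦ f(√s) convex. Then for every x > 0, (4/3π)·∫₀^∞ (1−f(y))/y² dy ≤ (8(x+1)/(3πx))·(1−f(x))^{1/2}. -/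
open Set MeasureTheory

theorem stmt_19 (f : ℝ → ℝ)
    (hcont : ContinuousOn f (Set.Ici 0))
    (hmono : AntitoneOn f (Set.Ici 0))
    (hf0 : f 0 = 1)
    (hbound : ∀ y ≥ 0, (1 + y^2/2)^(-2:ℤ) ≤ f y ∧ f y ≤ 1)
    (hconv : ConvexOn ℝ (Set.Ici 0) (fun s => f (Real.sqrt s))) :
    ∀ x > 0,
      (4/(3*Real.pi)) * ∫ y in Set.Ioi (0:ℝ), (1 - f y)/y^2 ≤
        (8*(x+1)/(3*Real.pi*x)) * Real.sqrt (1 - f x) := by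
  intro x hx
  have hπ : (0:ℝ) < Real.pi := Real.pi_pos
  have hfle1 : ∀ y, 0 ≤ y → f y ≤ 1 := fun y hy => (hbound y hy).2
  have hfpos : ∀ y, 0 ≤ y → 0 < f y := by
    intro y hy
    refine lt_of_lt_of_le ?_ (hbound y hy).1
    positivity
  have key1 : ∀ y, 0 ≤ y → 1 - f y ≤ y^2 := by
    intro y hy
    have hlb := (hbound y hy).1
    rw [show (1 + y^2/2)^(-2:ℤ) = ((1+y^2/2)^2)⁻¹ by rw [zpow_neg, zpow_two, sq]; ring_nf]
      at hlb
    have hinv : ((1+y^2/2)^2)⁻¹ * (1+y^2/2)^2 = 1 := inv_mul_cancel₀ (by positivity)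
    nlinarith [hlb, hinv, sq_nonneg y, sq_nonneg (y^2),
      inv_nonneg.mpr (sq_nonneg (1+y^2/2)), sq_nonneg (1+y^2/2)]
  have keyConv : ∀ y z : ℝ, 0 ≤ y → y ≤ z → 0 < z →
      (1 - f z) * y^2 ≤ (1 - f y) * z^2 := by
    intro y z hy hyz hz
    have hz2 : (0:ℝ) < z^2 := by positivity
    have h1 : (0:ℝ) ≤ 1 - y^2/z^2 := by
      rw [sub_nonneg, div_le_one hz2]; nlinarith
    have h2 : (0:ℝ) ≤ y^2/z^2 := by positivity
    have h3 : (1 - y^2/z^2) + y^2/z^2 = 1 := by ring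
    have hmem : z^2 ∈ Set.Ici (0:ℝ) := le_of_lt hz2
    have hc := hconv.2 (Set.self_mem_Ici) hmem h1 h2 h3
    simp only [smul_eq_mul, mul_zero, zero_add] at hc
    rw [show y^2/z^2 * z^2 = y^2 by field_simp] at hc
    rw [Real.sqrt_sq hy, Real.sqrt_sq hz.le, Real.sqrt_zero, hf0] at hc
    have ht : y^2/z^2 * z^2 = y^2 := by field_simp
    have ht2 : y^2/z^2 * f z * z^2 = f z * y^2 := by field_simp
    have h5 := mul_le_mul_of_nonneg_right hc hz2.le
    nlinarith [h5, ht, ht2]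
  have ha0 : 0 ≤ 1 - f x := by linarith [hfle1 x hx.le]
  set F : ℝ → ℝ := fun y => (1 - f y)/y^2 with hF
  have hFnonneg : ∀ y, 0 < y → 0 ≤ F y := fun y hy =>
    div_nonneg (by linarith [hfle1 y hy.le]) (by positivity)
  have hFcont : ContinuousOn F (Ioi 0) := by
    apply ContinuousOn.div (continuousOn_const.sub (hcont.mono Ioi_subset_Ici_self))
      (continuous_pow 2).continuousOn
    intro y hy
    exact pow_ne_zero 2 (ne_of_gt hy)
  rcases eq_or_lt_of_le ha0 with hA | hA
  · -- degenerate case : f x = 1, integrand vanishes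
    have hfx1 : f x = 1 := by linarith
    have hzero : EqOn F (fun _ => (0:ℝ)) (Ioi 0) := by
      intro y hy
      have hy0 : (0:ℝ) < y := hy
      have hfy1 : f y = 1 := by
        rcases le_or_gt y x with h | h
        · have := hmono (Set.mem_Ici.mpr hy0.le) (Set.mem_Ici.mpr hx.le) h
          have := hfle1 y hy0.le
          linarith
        · have hk := keyConv x y hx.le h.le (by linarith)
          have h1 := hfle1 y hy0.le
          rw [hfx1] at hk
          have hkk : (1 - f y) * x^2 ≤ 0 := by linarith [hk]
          have hx2 : (0:ℝ) < x^2 := by positivity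
          nlinarith [hkk, hx2]
      show (1 - f y)/y^2 = 0
      rw [hfy1]; simp
    have : ∫ y in Ioi (0:ℝ), F y = 0 := by
      rw [setIntegral_congr_fun measurableSet_Ioi hzero]; simp
    rw [this, ← hA, Real.sqrt_zero, mul_zero, mul_zero]
  · -- main case
    set a : ℝ := 1 - f x with haDef
    set s : ℝ := Real.sqrt a with hsDef
    have hs0 : 0 < s := Real.sqrt_pos.mpr hA
    have hs2 : s^2 = a := Real.sq_sqrt ha0
    have hsx : s ≤ x := by
      have h := key1 x hx.le
      calc s = Real.sqrt a := rfl
        _ ≤ Real.sqrt (x^2) := Real.sqrt_le_sqrt h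
        _ = x := Real.sqrt_sq hx.le
    have hs1 : s ≤ 1 := by
      have h1 : a ≤ 1 := by have := hfpos x hx.le; rw [haDef]; linarith
      calc s ≤ Real.sqrt 1 := Real.sqrt_le_sqrt h1
        _ = 1 := Real.sqrt_one
    set c : ℝ := x / s with hcDef
    have hc0 : 0 < c := div_pos hx hs0
    have hxc : x ≤ c := by rw [hcDef, le_div_iff₀ hs0]; nlinarith
    have hmeas : ∀ t : Set ℝ, MeasurableSet t → t ⊆ Ioi 0 →
        AEStronglyMeasurable F (volume.restrict t) := fun t ht hsub =>
      (hFcont.mono hsub).aestronglyMeasurable ht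
    -- integrability on the four pieces
    have i1 : IntegrableOn F (Ioc 0 s) := by
      refine Integrable.mono' (g := fun _ => (1:ℝ))
        (integrableOn_const (by rw [Real.volume_Ioc]; exact ENNReal.ofReal_lt_top.ne))
        (hmeas _ measurableSet_Ioc Set.Ioc_subset_Ioi_self) ?_
      filter_upwards [ae_restrict_mem measurableSet_Ioc] with y hy
      have hy0 : 0 < y := hy.1
      rw [Real.norm_eq_abs, abs_of_nonneg (hFnonneg y hy0)]
      show (1 - f y)/y^2 ≤ 1
      rw [div_le_one (by positivity)]
      exact key1 y hy0.le
    have i2 : IntegrableOn F (Ioc s x) := by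
      refine ((hFcont.mono ?_).integrableOn_Icc).mono_set Ioc_subset_Icc_self
      intro y hy; exact lt_of_lt_of_le hs0 hy.1
    have i3 : IntegrableOn F (Ioc x c) := by
      refine ((hFcont.mono ?_).integrableOn_Icc).mono_set Ioc_subset_Icc_self
      intro y hy; exact lt_of_lt_of_le hx hy.1
    have i4 : IntegrableOn F (Ioi c) := by
      refine Integrable.mono' (integrableOn_Ioi_rpow_of_lt (a := (-2:ℝ)) (by norm_num) hc0)
        (hmeas _ measurableSet_Ioi (Ioi_subset_Ioi hc0.le)) ?_
      filter_upwards [ae_restrict_mem measurableSet_Ioi] with y hy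
      have hy0 : 0 < y := lt_trans hc0 hy
      rw [Real.norm_eq_abs, abs_of_nonneg (hFnonneg y hy0)]
      have hrp : y ^ (-2:ℝ) = (y^2)⁻¹ := by
        rw [Real.rpow_neg hy0.le, show (2:ℝ) = ((2:ℕ):ℝ) by norm_num, Real.rpow_natCast]
      show (1 - f y)/y^2 ≤ y^(-2:ℝ)
      rw [hrp, ← one_div]
      gcongr
      linarith [hfpos y hy0.le]
    have hIx : IntegrableOn F (Ioi x) := by
      rw [← Set.Ioc_union_Ioi_eq_Ioi hxc]; exact i3.union i4
    have hIs : IntegrableOn F (Ioi s) := by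
      rw [← Set.Ioc_union_Ioi_eq_Ioi hsx]; exact i2.union hIx
    have hsplit : ∫ y in Ioi (0:ℝ), F y =
        (∫ y in Ioc 0 s, F y) + ((∫ y in Ioc s x, F y) +
          ((∫ y in Ioc x c, F y) + ∫ y in Ioi c, F y)) := by
      rw [← setIntegral_union (Set.Ioc_disjoint_Ioi le_rfl) measurableSet_Ioi i3 i4,
        Set.Ioc_union_Ioi_eq_Ioi hxc,
        ← setIntegral_union (Set.Ioc_disjoint_Ioi le_rfl) measurableSet_Ioi i2 hIx,
        Set.Ioc_union_Ioi_eq_Ioi hsx,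
        ← setIntegral_union (Set.Ioc_disjoint_Ioi le_rfl) measurableSet_Ioi i1 hIs,
        Set.Ioc_union_Ioi_eq_Ioi hs0.le]
    -- bounds on the four pieces
    have c1 : (∫ y in Ioc 0 s, F y) ≤ s := by
      have h := setIntegral_mono_on i1
        (integrableOn_const (by rw [Real.volume_Ioc]; exact ENNReal.ofReal_lt_top.ne))
        measurableSet_Ioc (g := fun _ => (1:ℝ)) ?_
      · rw [setIntegral_const, Real.volume_real_Ioc_of_le (by linarith)] at h
        simpa using h
      · intro y hy
        have hy0 : 0 < y := hy.1
        show (1 - f y)/y^2 ≤ 1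
        rw [div_le_one (by positivity)]
        exact key1 y hy0.le
    have c2 : (∫ y in Ioc s x, F y) ≤ s - a/x := by
      have hig : IntegrableOn (fun y => a / y^2) (Ioc s x) := by
        refine ((ContinuousOn.div continuousOn_const (continuous_pow 2).continuousOn
          ?_).integrableOn_Icc).mono_set Ioc_subset_Icc_self
        intro y hy
        exact pow_ne_zero 2 (ne_of_gt (lt_of_lt_of_le hs0 hy.1))
      have h := setIntegral_mono_on i2 hig measurableSet_Ioc ?_
      · have hval : ∫ y in Ioc s x, a / y^2 = a * (s⁻¹ - x⁻¹) := by
          rw [← intervalIntegral.integral_of_le hsx]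
          have hrw : ∀ y : ℝ, a / y^2 = a * y^(-2:ℤ) := fun y => by
            rw [zpow_neg, zpow_two, sq, div_eq_mul_inv]
          simp_rw [hrw]
          rw [intervalIntegral.integral_const_mul, integral_zpow (Or.inr ⟨by norm_num,
            fun h => absurd (h.1) (by simp only [Set.uIcc_of_le hsx] at h ⊢; linarith [h.1])⟩)]
          norm_num
          left; ring
        rw [hval] at h
        have heq : a * (s⁻¹ - x⁻¹) = s - a/x := by
          rw [← hs2]; field_simp
        linarith [h, heq.le, heq.ge]
      · intro y hy
        have hy0 : 0 < y := lt_trans hs0 hy.1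
        have hfy := hmono (Set.mem_Ici.mpr hy0.le) (Set.mem_Ici.mpr hx.le) hy.2
        show (1 - f y)/y^2 ≤ a/y^2
        gcongr
        rw [haDef]; linarith
    have c3 : (∫ y in Ioc x c, F y) ≤ s/x - a/x := by
      have h := setIntegral_mono_on i3
        (integrableOn_const (by rw [Real.volume_Ioc]; exact ENNReal.ofReal_lt_top.ne))
        measurableSet_Ioc (g := fun _ => a/x^2) ?_
      · rw [setIntegral_const, Real.volume_real_Ioc_of_le (by linarith)] at h
        have heq : (c - x) • (a/x^2) = s/x - a/x := by
          rw [smul_eq_mul, hcDef, ← hs2]; field_simp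
        linarith [h, heq.le, heq.ge]
      · intro y hy
        have hy0 : 0 < y := lt_trans hx hy.1
        have hk := keyConv x y hx.le hy.1.le hy0
        show (1 - f y)/y^2 ≤ a/x^2
        rw [div_le_div_iff₀ (by positivity) (by positivity), haDef]
        nlinarith [hk]
    have c4 : (∫ y in Ioi c, F y) ≤ s/x := by
      have h := setIntegral_mono_on i4 (integrableOn_Ioi_rpow_of_lt (a := (-2:ℝ)) (by norm_num) hc0)
        measurableSet_Ioi (g := fun y => y ^ (-2:ℝ)) ?_
      · rw [integral_Ioi_rpow_of_lt (by norm_num) hc0] at h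
        have heq : -c ^ ((-2:ℝ) + 1) / ((-2:ℝ) + 1) = s/x := by
          norm_num
          rw [Real.rpow_neg_one, hcDef, inv_div]
        linarith [h, heq.le, heq.ge]
      · intro y hy
        have hy0 : 0 < y := lt_trans hc0 hy
        have hrp : y ^ (-2:ℝ) = (y^2)⁻¹ := by
          rw [Real.rpow_neg hy0.le, show (2:ℝ) = ((2:ℕ):ℝ) by norm_num, Real.rpow_natCast]
        show (1 - f y)/y^2 ≤ y^(-2:ℝ)
        rw [hrp, ← one_div]
        gcongr
        linarith [hfpos y hy0.le]
    have hax : 0 ≤ a/x := by positivity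
    have h1 : 2*(x+1)/x*s = 2*s + 2*(s/x) := by field_simp
    have hI : ∫ y in Ioi (0:ℝ), F y ≤ 2*(x+1)/x*s := by
      rw [hsplit]
      linarith [c1, c2, c3, c4, h1, hax]
    have hfinal := mul_le_mul_of_nonneg_left hI
      (by positivity : (0:ℝ) ≤ 4/(3*Real.pi))
    calc (4/(3*Real.pi)) * ∫ y in Ioi (0:ℝ), F y
        ≤ (4/(3*Real.pi)) * (2*(x+1)/x*s) := hfinal
      _ = (8*(x+1)/(3*Real.pi*x)) * s := by field_simp; ring
end
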